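/- If H : Δ → ℝ satisfies generalized Shannon additivity with α = 2, then the following are equivalent: (a) H(p₁,...,pₙ) = 2H(1/2,1/2)(1 − Σᵢ pᵢ²) for all stochastic vectors; (b) H is bounded on Δ₂; (c) H is continuous on Δ₂; (d) H is symmetric on Δ₂; (e) H is nonnegative on Δ₂ or nonpositive on Δ₂. -/

import Mathlib

open Real

/-- A finite stochastic vector: nonnegative entries summing to 1. -/
def IsStochastic (l : List ℝ) : Prop :=
  (∀ x ∈ l, 0 ≤ x) ∧ l.sum = 1

/-- Generalized Shannon additivity with parameter `α`: merging two adjacent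
components of a stochastic vector. Powers are real powers (`rpow`). -/
def GSA (α : ℝ) (H : List ℝ → ℝ) : Prop :=
  ∀ (l₁ l₂ : List ℝ) (a b : ℝ), IsStochastic (l₁ ++ a :: b :: l₂) → 0 < a + b →
    H (l₁ ++ a :: b :: l₂) =
      H (l₁ ++ (a + b) :: l₂) + (a + b) ^ α * H [a / (a + b), b / (a + b)]

namespace Stmt14


variable {H : List ℝ → ℝ}

lemma gsa2 (hH : GSA 2 H) (l₁ l₂ : List ℝ) (a b : ℝ)
    (hs : IsStochastic (l₁ ++ a :: b :: l₂)) (hab : 0 < a + b) :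
    H (l₁ ++ a :: b :: l₂) =
      H (l₁ ++ (a + b) :: l₂) + (a + b) ^ 2 * H [a / (a + b), b / (a + b)] := by
  have h := hH l₁ l₂ a b hs hab
  rwa [show ((2:ℝ)) = ((2:ℕ):ℝ) by norm_num, Real.rpow_natCast] at h

lemma stoch3 {x y z : ℝ} (hx : 0 ≤ x) (hy : 0 ≤ y) (hz : 0 ≤ z) (h : x + y + z = 1) :
    IsStochastic [x, y, z] := by
  constructor
  · intro t ht
    simp only [List.mem_cons, List.not_mem_nil, or_false] at ht
    rcases ht with rfl | rfl | rfl <;> assumption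
  · simp only [List.sum_cons, List.sum_nil]; linarith

lemma H_one (hH : GSA 2 H) : H [1] = 0 := by
  have h := gsa2 hH [] [] 1 0 (by
    constructor
    · intro t ht; simp only [List.nil_append, List.mem_cons, List.not_mem_nil, or_false] at ht
      rcases ht with rfl | rfl <;> norm_num
    · simp) (by norm_num)
  norm_num at h
  exact h

lemma g_zero (hH : GSA 2 H) : H [0, 1] = 0 := by
  have h1 := gsa2 hH [] [(1:ℝ)/2] 0 (1/2) (by
    have := stoch3 (x := (0:ℝ)) (y := 1/2) (z := 1/2) (by norm_num) (by norm_num) (by norm_num) (by norm_num)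
    simpa using this) (by norm_num)
  have h2 := gsa2 hH [(0:ℝ)] [] (1/2) (1/2) (by
    have := stoch3 (x := (0:ℝ)) (y := 1/2) (z := 1/2) (by norm_num) (by norm_num) (by norm_num) (by norm_num)
    simpa using this) (by norm_num)
  norm_num at h1 h2
  linarith

lemma g_one (hH : GSA 2 H) : H [1, 0] = 0 := by
  have h1 := gsa2 hH [] [(1:ℝ)/2] (1/2) 0 (by
    have := stoch3 (x := (1:ℝ)/2) (y := 0) (z := 1/2) (by norm_num) (by norm_num) (by norm_num) (by norm_num)
    simpa using this) (by norm_num)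
  have h2 := gsa2 hH [(1:ℝ)/2] [] 0 (1/2) (by
    have := stoch3 (x := (1:ℝ)/2) (y := 0) (z := 1/2) (by norm_num) (by norm_num) (by norm_num) (by norm_num)
    simpa using this) (by norm_num)
  have h0 := g_zero hH
  norm_num at h1 h2
  linarith




/-- The fundamental equation for `g p = H [p, 1-p]`. -/
lemma star_g (hH : GSA 2 H) : ∀ x y : ℝ, 0 ≤ x → 0 ≤ y → x + y ≤ 1 → 0 < x + y → x < 1 →
    H [x + y, 1 - (x + y)] + (x + y) ^ 2 * H [x / (x + y), 1 - x / (x + y)]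
      = H [x, 1 - x] + (1 - x) ^ 2 * H [y / (1 - x), 1 - y / (1 - x)] := by
  intro x y hx hy hxy1 hxy0 hx1
  have hz : 0 ≤ 1 - x - y := by linarith
  have hxyne : x + y ≠ 0 := ne_of_gt hxy0
  have h1xne : (1:ℝ) - x ≠ 0 := ne_of_gt (by linarith)
  have hst : IsStochastic [x, y, 1 - x - y] := stoch3 hx hy hz (by ring)
  have e1 := gsa2 hH [] [1 - x - y] x y (by simpa using hst) hxy0
  have e2 := gsa2 hH [x] [] y (1 - x - y) (by simpa using hst) (by linarith)
  simp only [List.nil_append, List.cons_append, List.append_nil] at e1 e2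
  rw [show y + (1 - x - y) = 1 - x by ring] at e2
  rw [show (1 - x - y) / (1 - x) = 1 - y / (1 - x) by field_simp] at e2
  rw [show 1 - x - y = 1 - (x + y) by ring] at e1 e2
  rw [show y / (x + y) = 1 - x / (x + y) by field_simp; ring] at e1
  linarith

/-- The same equation for `ĝ p = H [1-p, p]`. -/
lemma star_gflip (hH : GSA 2 H) : ∀ x y : ℝ, 0 ≤ x → 0 ≤ y → x + y ≤ 1 → 0 < x + y → x < 1 →
    H [1 - (x + y), x + y] + (x + y) ^ 2 * H [1 - x / (x + y), x / (x + y)]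
      = H [1 - x, x] + (1 - x) ^ 2 * H [1 - y / (1 - x), y / (1 - x)] := by
  intro x y hx hy hxy1 hxy0 hx1
  have hxyne : x + y ≠ 0 := ne_of_gt hxy0
  have h1xne : (1:ℝ) - x ≠ 0 := ne_of_gt (by linarith)
  have h := star_g hH (1 - x - y) y (by linarith) hy (by linarith) (by linarith) (by linarith)
  rw [show 1 - x - y + y = 1 - x by ring] at h
  rw [show (1:ℝ) - (1 - x) = x by ring] at h
  rw [show (1 - x - y) / (1 - x) = 1 - y / (1 - x) by field_simp] at h
  rw [show (1:ℝ) - (1 - y / (1 - x)) = y / (1 - x) by ring] at h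
  rw [show (1:ℝ) - (1 - x - y) = x + y by ring] at h
  rw [show 1 - x - y = 1 - (x + y) by ring] at h
  rw [show y / (x + y) = 1 - x / (x + y) by field_simp; ring] at h
  rw [show (1:ℝ) - (1 - x / (x + y)) = x / (x + y) by ring] at h
  linarith

/-- `x(1-x)` satisfies the star equation. -/
lemma star_q : ∀ x y : ℝ, 0 ≤ x → 0 ≤ y → x + y ≤ 1 → 0 < x + y → x < 1 →
    (x + y) * (1 - (x + y)) + (x + y) ^ 2 * ((x / (x + y)) * (1 - x / (x + y)))
      = x * (1 - x) + (1 - x) ^ 2 * ((y / (1 - x)) * (1 - y / (1 - x))) := by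
  intro x y hx hy hxy1 hxy0 hx1
  have hxyne : x + y ≠ 0 := ne_of_gt hxy0
  have h1xne : (1:ℝ) - x ≠ 0 := ne_of_gt (by linarith)
  field_simp
  ring



/-- Abstract star hypothesis. -/
def StarHyp (f : ℝ → ℝ) : Prop :=
  ∀ x y : ℝ, 0 ≤ x → 0 ≤ y → x + y ≤ 1 → 0 < x + y → x < 1 →
    f (x + y) + (x + y) ^ 2 * f (x / (x + y)) = f x + (1 - x) ^ 2 * f (y / (1 - x))

/-- A symmetric solution of the star equation vanishing at 1/2, 0, 1 vanishes identically. -/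
lemma sym_case {G : ℝ → ℝ} (hG : StarHyp G) (hsym : ∀ x : ℝ, G (1 - x) = G x)
    (hhalf : G (1/2) = 0) (h0 : G 0 = 0) (h1 : G 1 = 0) :
    ∀ x : ℝ, 0 ≤ x → x ≤ 1 → G x = 0 := by
  have main : ∀ s : ℝ, 1/2 < s → s < 1 → G s = 0 := by
    intro s hs hs1
    have hs0 : (0:ℝ) < s := by linarith
    have hsne : s ≠ 0 := ne_of_gt hs0
    -- i0
    have i0 := hG (1/2) (s - 1/2) (by norm_num) (by linarith) (by linarith) (by linarith) (by norm_num)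
    rw [show (1:ℝ)/2 + (s - 1/2) = s by ring] at i0
    rw [show (s - 1/2) / (1 - 1/2) = 2*s - 1 by ring] at i0
    rw [hhalf] at i0
    -- ii0
    have hy2 : (0:ℝ) ≤ 1/2/s - 1/2 := by
      have : (1:ℝ)/2 ≤ 1/2/s := by
        rw [le_div_iff₀ hs0]; nlinarith
      linarith
    have hsle : (1:ℝ)/2/s ≤ 1 := by
      rw [div_le_one hs0]; linarith
    have ii0 := hG (1/2) (1/2/s - 1/2) (by norm_num) hy2
      (by rw [show (1:ℝ)/2 + (1/2/s - 1/2) = 1/2/s by ring]; exact hsle)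
      (by rw [show (1:ℝ)/2 + (1/2/s - 1/2) = 1/2/s by ring]; positivity)
      (by norm_num)
    rw [show (1:ℝ)/2 + (1/2/s - 1/2) = 1/2/s by ring] at ii0
    rw [show (1:ℝ)/2 / (1/2/s) = s by field_simp] at ii0
    rw [show ((1:ℝ)/2/s - 1/2) / (1 - 1/2) = (1 - s)/s by field_simp; ring] at ii0
    rw [hhalf] at ii0
    -- iii0
    have iii0 := hG (1 - s) (1 - s) (by linarith) (by linarith) (by linarith) (by linarith) (by linarith)
    rw [show (1 - s) + (1 - s) = 1 - (2*s - 1) by ring] at iii0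
    rw [hsym (2*s - 1)] at iii0
    rw [show (1 - s) / (1 - (2*s - 1)) = 1/2 by rw [div_eq_iff (by linarith : (1:ℝ) - (2*s-1) ≠ 0)]; ring] at iii0
    rw [hhalf] at iii0
    rw [show (1:ℝ) - (1 - s) = s by ring] at iii0
    rw [hsym s] at iii0
    -- eliminate
    have h4 : s^2 * ((1:ℝ)/2/s)^2 = 1/4 := by field_simp; ring
    have ii' : s^2 * G (1/2/s) + 1/4 * G s = 1/4 * (s^2 * G ((1-s)/s)) := by
      linear_combination s^2 * ii0 - G s * h4
    linear_combination 2 * i0 - 2 * ii' + (1/2) * iii0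
  intro x hx0 hx1
  rcases lt_trichotomy x (1/2) with h | h | h
  · rcases eq_or_lt_of_le hx0 with h0' | h0'
    · rw [← h0']; exact h0
    · have := main (1 - x) (by linarith) (by linarith)
      rw [hsym x] at this; exact this
  · rw [h]; exact hhalf
  · rcases eq_or_lt_of_le hx1 with h1' | h1'
    · rw [h1']; exact h1
    · exact main x h h1'

/-- An antisymmetric, bounded solution of the star equation vanishes identically. -/
lemma antisym_case {D : ℝ → ℝ} (hD : StarHyp D) (hflip : ∀ x : ℝ, D (1 - x) = -D x)
    (h0 : D 0 = 0) (M : ℝ) (hM : ∀ x : ℝ, 0 ≤ x → x ≤ 1 → |D x| ≤ M) :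
    ∀ x : ℝ, 0 ≤ x → x ≤ 1 → D x = 0 := by
  have hhalf : D (1/2) = 0 := by
    have := hflip (1/2)
    rw [show (1:ℝ) - 1/2 = 1/2 by norm_num] at this
    linarith
  have beta : ∀ x : ℝ, 0 < x → x ≤ 1/2 → (1 - x)^2 * D (x/(1-x)) = D x := by
    intro x hx hx2
    have h1x : (1:ℝ) - x ≠ 0 := ne_of_gt (by linarith)
    have i0 := hD x (1 - 2*x) (le_of_lt hx) (by linarith) (by linarith) (by linarith) (by linarith)
    rw [show x + (1 - 2*x) = 1 - x by ring] at i0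
    rw [show (1 - 2*x)/(1 - x) = 1 - x/(1-x) by field_simp; ring] at i0
    rw [hflip (x/(1-x)), hflip x] at i0
    linear_combination (1/2) * i0
  have double : ∀ x : ℝ, 0 ≤ x → x ≤ 1/2 → D (2*x) = 2 * D x := by
    intro x hx0 hx2
    rcases eq_or_lt_of_le hx0 with h | h
    · rw [← h]; rw [show (2:ℝ) * 0 = 0 by norm_num, h0]; ring
    · have hxne : x ≠ 0 := ne_of_gt h
      have i1 := hD x x (le_of_lt h) (le_of_lt h) (by linarith) (by linarith) (by linarith)
      rw [show x + x = 2*x by ring] at i1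
      rw [show x / (2*x) = 1/2 by field_simp] at i1
      rw [hhalf] at i1
      linear_combination i1 + beta x h hx2
  -- iterate the bound
  have key : ∀ n : ℕ, ∀ x : ℝ, 0 ≤ x → x ≤ 1 → |D x| ≤ M / 2^n := by
    intro n
    induction n with
    | zero => simpa using hM
    | succ n ih =>
      have half : ∀ x : ℝ, 0 ≤ x → x ≤ 1/2 → |D x| ≤ M / 2^(n+1) := by
        intro x hx0 hx2
        have h2x := ih (2*x) (by linarith) (by linarith)
        rw [double x hx0 hx2, abs_mul, abs_two] at h2x
        have he : M / 2^(n+1) = (M / 2^n) / 2 := by rw [pow_succ]; ring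
        rw [he]; linarith
      intro x hx0 hx1
      rcases le_or_gt x (1/2) with h | h
      · exact half x hx0 h
      · have := half (1 - x) (by linarith) (by linarith)
        rw [hflip x, abs_neg] at this
        exact this
  intro x hx0 hx1
  by_contra hne
  have hpos : 0 < |D x| := abs_pos.mpr hne
  obtain ⟨n, hn⟩ : ∃ n : ℕ, M / |D x| < 2^n := pow_unbounded_of_one_lt _ one_lt_two
  have hkey := key n x hx0 hx1
  have h2 : (0:ℝ) < 2^n := by positivity
  rw [div_lt_iff₀ hpos] at hn
  rw [le_div_iff₀ h2] at hkey
  nlinarith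






/-- The symmetrized part is the Tsallis polynomial, unconditionally. -/
lemma sg_formula (hH : GSA 2 H) : ∀ p : ℝ, 0 ≤ p → p ≤ 1 →
    H [p, 1 - p] + H [1 - p, p] = 8 * H [1/2, 1/2] * (p * (1 - p)) := by
  set c : ℝ := H [1/2, 1/2] with hc
  have hG : StarHyp (fun x => H [x, 1 - x] + H [1 - x, x] - 8 * c * (x * (1 - x))) := by
    intro x y h1 h2 h3 h4 h5
    simp only []
    linear_combination star_g hH x y h1 h2 h3 h4 h5 + star_gflip hH x y h1 h2 h3 h4 h5
      - (8*c) * star_q x y h1 h2 h3 h4 h5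
  have hsym : ∀ x : ℝ, (fun x => H [x, 1 - x] + H [1 - x, x] - 8 * c * (x * (1 - x))) (1 - x)
      = (fun x => H [x, 1 - x] + H [1 - x, x] - 8 * c * (x * (1 - x))) x := by
    intro x
    simp only []
    rw [show (1:ℝ) - (1 - x) = x by ring]
    ring
  have hhalf : (fun x => H [x, 1 - x] + H [1 - x, x] - 8 * c * (x * (1 - x))) (1/2 : ℝ) = 0 := by
    simp only []
    rw [show (1:ℝ) - 1/2 = 1/2 by norm_num]
    rw [← hc]; ring
  have h0 : (fun x => H [x, 1 - x] + H [1 - x, x] - 8 * c * (x * (1 - x))) (0:ℝ) = 0 := by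
    simp only []
    rw [show (1:ℝ) - 0 = 1 by ring, g_zero hH, g_one hH]; ring
  have h1 : (fun x => H [x, 1 - x] + H [1 - x, x] - 8 * c * (x * (1 - x))) (1:ℝ) = 0 := by
    simp only []
    rw [show (1:ℝ) - 1 = 0 by ring, g_zero hH, g_one hH]; ring
  intro p hp0 hp1
  have := sym_case hG hsym hhalf h0 h1 p hp0 hp1
  linarith

/-- If the asymmetry is bounded it vanishes. -/
lemma D_zero (hH : GSA 2 H) (M : ℝ)
    (hbd : ∀ p : ℝ, 0 ≤ p → p ≤ 1 → |H [p, 1 - p] - H [1 - p, p]| ≤ M) :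
    ∀ p : ℝ, 0 ≤ p → p ≤ 1 → H [p, 1 - p] = H [1 - p, p] := by
  have hD : StarHyp (fun x => H [x, 1 - x] - H [1 - x, x]) := by
    intro x y h1 h2 h3 h4 h5
    simp only []
    linear_combination star_g hH x y h1 h2 h3 h4 h5 - star_gflip hH x y h1 h2 h3 h4 h5
  have hflip : ∀ x : ℝ, (fun x => H [x, 1 - x] - H [1 - x, x]) (1 - x)
      = -((fun x => H [x, 1 - x] - H [1 - x, x]) x) := by
    intro x
    simp only []
    rw [show (1:ℝ) - (1 - x) = x by ring]; ring
  have h0 : (fun x => H [x, 1 - x] - H [1 - x, x]) (0:ℝ) = 0 := by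
    simp only []
    rw [show (1:ℝ) - 0 = 1 by ring, g_zero hH, g_one hH]; ring
  intro p hp0 hp1
  have := antisym_case hD hflip h0 M (by intro x hx0 hx1; simpa using hbd x hx0 hx1) p hp0 hp1
  linarith

/-- bounded asymmetry gives the two-point Tsallis formula -/
lemma g_formula (hH : GSA 2 H) (M : ℝ)
    (hbd : ∀ p : ℝ, 0 ≤ p → p ≤ 1 → |H [p, 1 - p] - H [1 - p, p]| ≤ M) :
    ∀ p : ℝ, 0 ≤ p → p ≤ 1 → H [p, 1 - p] = 4 * H [1/2, 1/2] * (p * (1 - p)) := by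
  intro p hp0 hp1
  have h1 := sg_formula hH p hp0 hp1
  have h2 := D_zero hH M hbd p hp0 hp1
  linarith




lemma stoch_repl {k : ℕ} {q : ℝ} {r : List ℝ} (hq : 0 ≤ q) (hr : ∀ x ∈ r, 0 ≤ x)
    (hsum : q + r.sum = 1) : IsStochastic (List.replicate k 0 ++ q :: r) := by
  constructor
  · intro x hx
    rcases List.mem_append.mp hx with h | h
    · rw [List.eq_of_mem_replicate h]
    · rcases List.mem_cons.mp h with rfl | h
      · exact hq
      · exact hr x h
  · rw [List.sum_append, List.sum_replicate, List.sum_cons]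
    simp [hsum]

lemma Z1 (hH : GSA 2 H) : ∀ (k : ℕ) (q : ℝ) (r : List ℝ), 0 < q → (∀ x ∈ r, 0 ≤ x) →
    q + r.sum = 1 → H (List.replicate k 0 ++ q :: r) = H (q :: r) := by
  intro k
  induction k with
  | zero => intro q r _ _ _; simp
  | succ k ih =>
    intro q r hq hr hsum
    have hlist : List.replicate (k+1) (0:ℝ) ++ q :: r = List.replicate k 0 ++ 0 :: q :: r := by
      rw [List.replicate_succ', List.append_assoc]; rfl
    rw [hlist]
    have hst : IsStochastic (List.replicate k (0:ℝ) ++ 0 :: q :: r) := by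
      apply stoch_repl le_rfl
      · intro x hx
        rcases List.mem_cons.mp hx with rfl | h
        · exact le_of_lt hq
        · exact hr x h
      · rw [List.sum_cons]; linarith
    have e := gsa2 hH (List.replicate k 0) r 0 q hst (by linarith)
    rw [zero_add] at e
    rw [show (0:ℝ)/q = 0 by simp, div_self (ne_of_gt hq)] at e
    rw [g_zero hH] at e
    rw [e]
    rw [ih q r hq hr hsum]
    ring
  
lemma Z2 (hH : GSA 2 H) : ∀ (m : List ℝ), (∀ x ∈ m, 0 ≤ x) → m.sum = 1 →
    ∀ k : ℕ, H (List.replicate k 0 ++ m) = H m := by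
  intro m
  induction m with
  | nil => intro _ hsum; simp at hsum
  | cons q r ih =>
    intro hm hsum k
    have hq0 : 0 ≤ q := hm q List.mem_cons_self
    have hr : ∀ x ∈ r, 0 ≤ x := fun x hx => hm x (List.mem_cons_of_mem q hx)
    rcases eq_or_lt_of_le hq0 with h | h
    · -- q = 0
      have hrsum : r.sum = 1 := by rw [List.sum_cons, ← h, zero_add] at hsum; exact hsum
      have hlist : List.replicate k (0:ℝ) ++ q :: r = List.replicate (k+1) 0 ++ r := by
        rw [List.replicate_succ', List.append_assoc, ← h]; rfl
      rw [hlist, ih hr hrsum (k+1)]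
      have : (q :: r) = List.replicate 1 (0:ℝ) ++ r := by rw [← h]; rfl
      rw [this, ih hr hrsum 1]
    · rw [List.sum_cons] at hsum
      exact Z1 hH k q r h hr hsum

lemma main_formula (hH : GSA 2 H)
    (hg : ∀ p : ℝ, 0 ≤ p → p ≤ 1 → H [p, 1 - p] = 4 * H [1/2, 1/2] * (p * (1 - p))) :
    ∀ l : List ℝ, IsStochastic l → H l = 2 * H [1/2, 1/2] * (1 - (l.map fun p => p ^ 2).sum) := by
  set c : ℝ := H [1/2, 1/2] with hc
  suffices haux : ∀ (n : ℕ) (l : List ℝ), l.length ≤ n → IsStochastic l →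
      H l = 2 * c * (1 - (l.map fun p => p ^ 2).sum) by
    intro l hl; exact haux l.length l le_rfl hl
  intro n
  induction n with
  | zero =>
    intro l hlen hst
    have : l = [] := List.length_eq_zero_iff.mp (Nat.le_zero.mp hlen)
    rw [this] at hst
    have h2 := hst.2
    simp at h2
  | succ n ih =>
    intro l hlen hst
    match l with
    | [] =>
      have h2 := hst.2
      simp at h2
    | [p] =>
      have hp : p = 1 := by
        have := hst.2; simpa using this
      subst hp
      rw [H_one hH]
      simp
    | a :: b :: t =>
      have ha : 0 ≤ a := hst.1 a (by simp)
      have hb : 0 ≤ b := hst.1 b (by simp)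
      have ht : ∀ x ∈ t, 0 ≤ x := fun x hx => hst.1 x (by simp [hx])
      have htsum : 0 ≤ t.sum := List.sum_nonneg ht
      have hsum : a + (b + t.sum) = 1 := by
        have := hst.2; simpa using this
      have hlen' : t.length + 1 ≤ n := by
        simp only [List.length_cons] at hlen
        omega
      rcases eq_or_lt_of_le (add_nonneg ha hb) with hab | hab
      · -- a + b = 0, so a = b = 0
        have ha0 : a = 0 := by linarith
        have hb0 : b = 0 := by linarith
        subst ha0; subst hb0
        have htsum1 : t.sum = 1 := by linarith
        have hz := Z2 hH t ht htsum1 2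
        have hlist : List.replicate 2 (0:ℝ) ++ t = 0 :: 0 :: t := rfl
        rw [hlist] at hz
        rw [hz]
        rw [ih t (by omega) ⟨ht, htsum1⟩]
        simp
      · -- 0 < a + b
        have habne : a + b ≠ 0 := ne_of_gt hab
        have e := gsa2 hH [] t a b (by simpa using hst) hab
        simp only [List.nil_append] at e
        rw [show b / (a + b) = 1 - a / (a + b) by field_simp; ring] at e
        have hgp := hg (a / (a + b)) (div_nonneg ha (le_of_lt hab))
          (by rw [div_le_one hab]; linarith)
        rw [hgp] at e
        have hih := ih ((a + b) :: t) (by simpa using hlen')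
          ⟨by
            intro x hx
            rcases List.mem_cons.mp hx with rfl | hx
            · exact add_nonneg ha hb
            · exact ht x hx,
           by rw [List.sum_cons]; linarith⟩
        rw [hih] at e
        rw [e]
        have expand : (a + b) ^ 2 * (4 * c * (a / (a + b) * (1 - a / (a + b)))) = 4 * c * (a * b) := by
          field_simp
          ring
        simp only [List.map_cons, List.sum_cons]
        linear_combination expand



lemma stoch2 {p : ℝ} (hp0 : 0 ≤ p) (hp1 : p ≤ 1) : IsStochastic [p, 1 - p] := by
  constructor
  · intro x hx
    simp only [List.mem_cons, List.not_mem_nil, or_false] at hx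
    rcases hx with rfl | rfl
    · exact hp0
    · linarith
  · simp


end Stmt14


open Stmt14 in
theorem stmt_14 (H : List ℝ → ℝ) (hH : GSA 2 H) :
    List.TFAE
      [ ∀ l : List ℝ, IsStochastic l →
          H l = 2 * H [1/2, 1/2] * (1 - (l.map fun p => p ^ 2).sum),
        ∃ M : ℝ, ∀ p ∈ Set.Icc (0 : ℝ) 1, |H [p, 1 - p]| ≤ M,
        ContinuousOn (fun p => H [p, 1 - p]) (Set.Icc (0 : ℝ) 1) ∧
          ContinuousOn (fun p => H [1 - p, p]) (Set.Icc (0 : ℝ) 1),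
        ∀ p ∈ Set.Icc (0 : ℝ) 1, H [p, 1 - p] = H [1 - p, p],
        (∀ p ∈ Set.Icc (0 : ℝ) 1, 0 ≤ H [p, 1 - p]) ∨
          (∀ p ∈ Set.Icc (0 : ℝ) 1, H [p, 1 - p] ≤ 0) ] := by
  have h2pt : (∀ l : List ℝ, IsStochastic l →
      H l = 2 * H [1/2, 1/2] * (1 - (l.map fun p => p ^ 2).sum)) →
      ∀ p : ℝ, 0 ≤ p → p ≤ 1 →
        H [p, 1 - p] = 2 * H [1/2, 1/2] * (1 - (p^2 + (1-p)^2)) := by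
    intro h1 p hp0 hp1
    have := h1 [p, 1 - p] (stoch2 hp0 hp1)
    simp only [List.map_cons, List.map_nil, List.sum_cons, List.sum_nil, add_zero] at this
    exact this
  have h2pt' : (∀ l : List ℝ, IsStochastic l →
      H l = 2 * H [1/2, 1/2] * (1 - (l.map fun p => p ^ 2).sum)) →
      ∀ p : ℝ, 0 ≤ p → p ≤ 1 →
        H [1 - p, p] = 2 * H [1/2, 1/2] * (1 - ((1-p)^2 + p^2)) := by
    intro h1 p hp0 hp1
    have hst : IsStochastic [1 - p, p] := by
      have := stoch2 (p := 1 - p) (by linarith) (by linarith)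
      rwa [show (1:ℝ) - (1 - p) = p by ring] at this
    have := h1 [1 - p, p] hst
    simp only [List.map_cons, List.map_nil, List.sum_cons, List.sum_nil, add_zero] at this
    exact this
  tfae_have 1 → 2 := by
    intro h1
    refine ⟨|2 * H [1/2, 1/2]|, ?_⟩
    intro p hp
    rw [Set.mem_Icc] at hp
    rw [h2pt h1 p hp.1 hp.2, abs_mul]
    have hX : |1 - (p^2 + (1-p)^2)| ≤ 1 := by
      rw [abs_le]; constructor <;> nlinarith [hp.1, hp.2]
    nlinarith [abs_nonneg (2 * H [1/2, 1/2])]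
  tfae_have 1 → 3 := by
    intro h1
    constructor
    · refine ContinuousOn.congr (f := fun p : ℝ => 2 * H [1/2, 1/2] * (1 - (p^2 + (1-p)^2)))
        (by fun_prop) ?_
      intro p hp
      rw [Set.mem_Icc] at hp
      exact h2pt h1 p hp.1 hp.2
    · refine ContinuousOn.congr (f := fun p : ℝ => 2 * H [1/2, 1/2] * (1 - ((1-p)^2 + p^2)))
        (by fun_prop) ?_
      intro p hp
      rw [Set.mem_Icc] at hp
      exact h2pt' h1 p hp.1 hp.2
  tfae_have 1 → 4 := by
    intro h1 p hp
    rw [Set.mem_Icc] at hp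
    rw [h2pt h1 p hp.1 hp.2, h2pt' h1 p hp.1 hp.2]
    ring
  tfae_have 1 → 5 := by
    intro h1
    rcases le_total 0 (H [1/2, 1/2]) with hc | hc
    · left
      intro p hp
      rw [Set.mem_Icc] at hp
      rw [h2pt h1 p hp.1 hp.2]
      nlinarith [mul_nonneg (mul_nonneg hc hp.1) (by linarith : (0:ℝ) ≤ 1 - p)]
    · right
      intro p hp
      rw [Set.mem_Icc] at hp
      rw [h2pt h1 p hp.1 hp.2]
      nlinarith [mul_nonneg hp.1 (by linarith : (0:ℝ) ≤ 1 - p), hc]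
  tfae_have 3 → 2 := by
    intro h3
    obtain ⟨M, hM⟩ := IsCompact.exists_bound_of_continuousOn isCompact_Icc h3.1
    refine ⟨M, fun p hp => ?_⟩
    have := hM p hp
    rwa [Real.norm_eq_abs] at this
  tfae_have 2 → 1 := by
    intro ⟨M, hM⟩
    refine main_formula hH (g_formula hH (M + M) ?_)
    intro p hp0 hp1
    have b1 := hM p (Set.mem_Icc.mpr ⟨hp0, hp1⟩)
    have b2 := hM (1 - p) (Set.mem_Icc.mpr ⟨by linarith, by linarith⟩)
    rw [show (1:ℝ) - (1 - p) = p by ring] at b2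
    have tri := abs_add_le (H [p, 1 - p]) (-(H [1 - p, p]))
    rw [abs_neg] at tri
    rw [sub_eq_add_neg]
    linarith
  tfae_have 4 → 1 := by
    intro h4
    refine main_formula hH (g_formula hH 0 ?_)
    intro p hp0 hp1
    rw [h4 p (Set.mem_Icc.mpr ⟨hp0, hp1⟩)]
    simp
  tfae_have 5 → 1 := by
    intro h5
    rcases h5 with hpos | hneg
    · have hc : 0 ≤ H [1/2, 1/2] := by
        have := hpos (1/2) (Set.mem_Icc.mpr ⟨by norm_num, by norm_num⟩)
        rwa [show (1:ℝ) - 1/2 = 1/2 by norm_num] at this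
      refine main_formula hH (g_formula hH (2 * H [1/2, 1/2]) ?_)
      intro p hp0 hp1
      have ha := hpos p (Set.mem_Icc.mpr ⟨hp0, hp1⟩)
      have hb := hpos (1 - p) (Set.mem_Icc.mpr ⟨by linarith, by linarith⟩)
      rw [show (1:ℝ) - (1 - p) = p by ring] at hb
      have hs := sg_formula hH p hp0 hp1
      rw [abs_le]
      constructor <;> nlinarith [mul_nonneg hc (sq_nonneg (2*p - 1))]
    · have hc : H [1/2, 1/2] ≤ 0 := by
        have := hneg (1/2) (Set.mem_Icc.mpr ⟨by norm_num, by norm_num⟩)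
        rwa [show (1:ℝ) - 1/2 = 1/2 by norm_num] at this
      refine main_formula hH (g_formula hH (-(2 * H [1/2, 1/2])) ?_)
      intro p hp0 hp1
      have ha := hneg p (Set.mem_Icc.mpr ⟨hp0, hp1⟩)
      have hb := hneg (1 - p) (Set.mem_Icc.mpr ⟨by linarith, by linarith⟩)
      rw [show (1:ℝ) - (1 - p) = p by ring] at hb
      have hs := sg_formula hH p hp0 hp1
      rw [abs_le]
      constructor <;> nlinarith [mul_nonneg (neg_nonneg.mpr hc) (sq_nonneg (2*p - 1))]
  tfae_finish
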